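/- Every Fréchet-Urysohn topological group is strongly Fréchet. -/

import Mathlib

open Filter Topology Set

/-- A strongly Fréchet space: whenever `(A n)` is a decreasing sequence of subsets and
`x` lies in the closure of every `A n`, there are points `p n ∈ A n` converging to `x`. -/
def StronglyFrechetSpace (X : Type*) [TopologicalSpace X] : Prop :=
  ∀ A : ℕ → Set X, (∀ n, A (n + 1) ⊆ A n) → ∀ x : X, (∀ n, x ∈ closure (A n)) →
    ∃ p : ℕ → X, (∀ n, p n ∈ A n) ∧ Tendsto p atTop (𝓝 x)

private lemma pigeon13 (f : ℕ → ℕ) (b : ℕ) (h : ∃ᶠ i in atTop, f i < b) :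
    ∃ v, ∃ᶠ i in atTop, f i = v := by
  by_contra hc
  push_neg at hc
  have h1 : ∀ᶠ i in atTop, ∀ v ∈ Finset.range b, f i ≠ v := by
    rw [Filter.eventually_all_finset]
    intro v _
    exact hc v
  have h2 : ∀ᶠ i in atTop, ¬ f i < b :=
    h1.mono fun i hi hlt => hi (f i) (Finset.mem_range.mpr hlt) rfl
  obtain ⟨i, hi1, hi2⟩ := (h.and_eventually h2).exists
  exact hi2 hi1

private lemma aux13 {G : Type*} [Group G] [TopologicalSpace G] [IsTopologicalGroup G]
    [FrechetUrysohnSpace G] (A : ℕ → Set G) (hdec : ∀ n, A (n + 1) ⊆ A n)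
    (hx : ∀ n, (1 : G) ∈ closure (A n)) :
    ∃ p : ℕ → G, (∀ n, p n ∈ A n) ∧ Tendsto p atTop (𝓝 1) := by
  have hA : Antitone A := antitone_nat_of_succ_le hdec
  set K : Set G := {g | ∀ U ∈ 𝓝 (1 : G), g ∈ U} with hKdef
  have hconstK : ∀ c : G, Tendsto (fun _ : ℕ => c) atTop (𝓝 1) → c ∈ K := by
    intro c h U hU
    exact (h.eventually_mem hU).exists.elim fun _ hc => hc
  by_cases hcase : ∀ n, (A n ∩ K).Nonempty
  · choose p hp using hcase
    refine ⟨p, fun n => (hp n).1, ?_⟩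
    rw [Filter.tendsto_def]
    intro U hU
    exact Filter.Eventually.of_forall fun n => (hp n).2 U hU
  · push_neg at hcase
    obtain ⟨m₀, hm₀⟩ := hcase
    set A' : ℕ → Set G := fun n => A (m₀ + n) with hA'def
    have hA' : ∀ {m n : ℕ}, m ≤ n → A' n ⊆ A' m := fun h => hA (by omega)
    have hK' : ∀ n, ∀ g ∈ A' n, g ∉ K := fun n g hg hgK =>
      Set.eq_empty_iff_forall_notMem.mp hm₀ g ⟨hA (Nat.le_add_right _ _) hg, hgK⟩
    have hcl : ∀ n, (1 : G) ∈ closure (A' n) := fun n => hx _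
    choose σ hσmem hσlim using fun n => mem_closure_iff_seq_limit.mp (hcl n)
    set B : Set G := {z | (∃ n k, z = σ 0 n * σ n k) ∧ z ∉ K} with hBdef
    -- every σ 0 n is in the closure of B
    have hB : ∀ n, σ 0 n ∈ closure B := by
      intro n
      have hten : Tendsto (fun k => σ 0 n * σ n k) atTop (𝓝 (σ 0 n)) := by
        simpa using tendsto_const_nhds.mul (hσlim n)
      have hfreq : ∃ᶠ k in atTop, σ 0 n * σ n k ∉ K := by
        by_contra h
        rw [Filter.not_frequently] at h
        simp only [not_not] at h
        have h1 : Tendsto (fun k => σ 0 n * σ n k) atTop (𝓝 1) := by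
          rw [Filter.tendsto_def]
          intro U hU
          exact h.mono fun k hk => hk U hU
        have h2 : Tendsto (fun k => (σ 0 n * σ n k) * (σ n k)⁻¹) atTop (𝓝 1) := by
          simpa using h1.mul (hσlim n).inv
        simp only [mul_inv_cancel_right] at h2
        exact hK' 0 _ (hσmem 0 n) (hconstK _ h2)
      exact mem_closure_of_frequently_of_tendsto
        (hfreq.mono fun k hk => ⟨⟨n, k, rfl⟩, hk⟩) hten
    have hone : (1 : G) ∈ closure B := by
      have := mem_closure_of_tendsto (hσlim 0) (Filter.Eventually.of_forall hB)
      rwa [closure_closure] at this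
    obtain ⟨z, hzmem, hzlim⟩ := mem_closure_iff_seq_limit.mp hone
    choose n k hnk using fun j => (hzmem j).1
    have hzK : ∀ j, z j ∉ K := fun j => (hzmem j).2
    -- no value of n occurs frequently
    have claim1 : ∀ v : ℕ, ¬ ∃ᶠ j in atTop, n j = v := by
      intro v hv
      obtain ⟨φ, hφ, hφv⟩ := Filter.extraction_of_frequently_atTop hv
      have hw : Tendsto (fun i => z (φ i)) atTop (𝓝 1) := hzlim.comp hφ.tendsto_atTop
      have heqz : ∀ i, z (φ i) = σ 0 v * σ v (k (φ i)) := fun i => by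
        rw [hnk (φ i), hφv i]
      by_cases hκ : Tendsto (fun i => k (φ i)) atTop atTop
      · have h1 : Tendsto (fun i => σ v (k (φ i))) atTop (𝓝 1) := (hσlim v).comp hκ
        have h2 : Tendsto (fun i => z (φ i) * (σ v (k (φ i)))⁻¹) atTop (𝓝 1) := by
          simpa using hw.mul h1.inv
        have heq : (fun i => z (φ i) * (σ v (k (φ i)))⁻¹) = fun _ => σ 0 v := by
          funext i
          rw [heqz i, mul_inv_cancel_right]
        rw [heq] at h2
        exact hK' 0 _ (hσmem 0 v) (hconstK _ h2)
      · rw [Filter.tendsto_atTop] at hκ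
        push_neg at hκ
        obtain ⟨b, hb⟩ := hκ
        have hb' : ∃ᶠ i in atTop, k (φ i) < b := by
          exact hb.mono fun i hi => by omega
        obtain ⟨u, hu⟩ := pigeon13 _ b hb'
        obtain ⟨ψ, hψ, hψu⟩ := Filter.extraction_of_frequently_atTop hu
        have hc : Tendsto (fun i => z (φ (ψ i))) atTop (𝓝 1) :=
          hw.comp hψ.tendsto_atTop
        have heqc : (fun i => z (φ (ψ i))) = fun _ => σ 0 v * σ v u := by
          funext i
          rw [heqz (ψ i), hψu i]
        rw [heqc] at hc
        exact hzK (φ (ψ 0)) (by rw [heqz (ψ 0), hψu 0]; exact hconstK _ hc)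
    have htop : Tendsto n atTop atTop := by
      rw [Filter.tendsto_atTop]
      intro b
      by_contra h
      rw [Filter.not_eventually] at h
      have h' : ∃ᶠ j in atTop, n j < b := h.mono fun j hj => by omega
      obtain ⟨v, hv⟩ := pigeon13 _ b h'
      exact claim1 v hv
    have hqlim : Tendsto (fun j => σ (n j) (k j)) atTop (𝓝 1) := by
      have h0 : Tendsto (fun j => σ 0 (n j)) atTop (𝓝 1) := (hσlim 0).comp htop
      have h2 : Tendsto (fun j => (σ 0 (n j))⁻¹ * z j) atTop (𝓝 1) := by
        simpa using h0.inv.mul hzlim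
      have heq : (fun j => (σ 0 (n j))⁻¹ * z j) = fun j => σ (n j) (k j) := by
        funext j
        rw [hnk j, inv_mul_cancel_left]
      rwa [heq] at h2
    choose e he1 he2 using fun m =>
      ((Filter.eventually_ge_atTop m).and (Filter.tendsto_atTop.mp htop m)).exists
    refine ⟨fun m => σ (n (e m)) (k (e m)), fun m => ?_, ?_⟩
    · exact hA (Nat.le_add_right m m₀ |>.trans (by omega)) (hA' (he2 m) (hσmem _ _))
    · exact hqlim.comp (tendsto_atTop_mono he1 tendsto_id)

theorem stmt13 {G : Type*} [Group G] [TopologicalSpace G] [IsTopologicalGroup G]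
    [FrechetUrysohnSpace G] : StronglyFrechetSpace G := by
  intro A hdec x hx
  set C : ℕ → Set G := fun n => (fun g => x⁻¹ * g) '' A n with hCdef
  have hCdec : ∀ n, C (n + 1) ⊆ C n := fun n => Set.image_mono (hdec n)
  have hCcl : ∀ n, (1 : G) ∈ closure (C n) := by
    intro n
    have hcont : Continuous (fun g : G => x⁻¹ * g) := continuous_const.mul continuous_id
    have : x⁻¹ * x ∈ (fun g => x⁻¹ * g) '' closure (A n) := ⟨x, hx n, rfl⟩
    have h2 := image_closure_subset_closure_image hcont this
    simpa only [inv_mul_cancel] using h2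
  obtain ⟨p, hp, hplim⟩ := aux13 C hCdec hCcl
  refine ⟨fun m => x * p m, fun m => ?_, ?_⟩
  · obtain ⟨a, ha, hae⟩ := hp m
    show x * p m ∈ A m
    rw [← hae]
    simp only [mul_inv_cancel_left]
    exact ha
  · simpa using tendsto_const_nhds.mul hplim
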